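/- For every count vector a_s = (a_s(0), …, a_s(m−1)) of nonnegative integers with M_s = Σ_j a_s(j) ≥ 1, the Krichevsky–Trofimov estimated probability P_e(a_s) satisfies log P_e(a_s) ≤ Σ_j a_s(j) log(a_s(j)/M_s) − ((m−1)/2) log(M_s/(2π)) − log(π^{m/2}/Γ(m/2)). -/

import Mathlib

open Real

noncomputable section

/-- The Krichevsky–Trofimov estimated probability
`P_e(a) = [∏_j (1/2)(3/2)···(a(j)-1/2)] / [(m/2)(m/2+1)···(m/2+M-1)]`
of a count vector `a`, where `M = ∑_j a(j)`. -/
def ktProb (m : ℕ) (a : Fin m → ℕ) : ℝ :=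
  (∏ j, ∏ i ∈ Finset.range (a j), ((i : ℝ) + 1 / 2)) /
    ∏ i ∈ Finset.range (∑ j, a j), ((m : ℝ) / 2 + i)

end

open Real Filter Nat Topology

noncomputable section

namespace KTaux


/-- elementary log lower bound : `log x ≥ 2(x-1)/(x+1)` for `x ≥ 1`. -/
lemma log_ge_two_mul_div {x : ℝ} (hx : 1 ≤ x) : 2 * (x - 1) / (x + 1) ≤ Real.log x := by
  have h0 : (0:ℝ) < x := lt_of_lt_of_le one_pos hx
  set f : ℝ → ℝ := fun y => Real.log y - 2 * (y - 1) / (y + 1) with hf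
  have hmono : MonotoneOn f (Set.Ici 1) := by
    have hderiv : ∀ y ∈ interior (Set.Ici (1:ℝ)), HasDerivAt f (1 / y - 4 / (y + 1) ^ 2) y := by
      intro y hy
      rw [interior_Ici] at hy
      have hy1 : (1:ℝ) < y := hy
      have hy0 : y ≠ 0 := by positivity
      have hy1' : y + 1 ≠ 0 := by positivity
      have h1 : HasDerivAt Real.log (1 / y) y := by
        simpa [one_div] using Real.hasDerivAt_log hy0
      have h2 : HasDerivAt (fun y : ℝ => 2 * (y - 1) / (y + 1))
          ((2 * 1 * (id y + 1) - 2 * (id y - 1) * 1) / (id y + 1) ^ 2) y :=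
        (((hasDerivAt_id y).sub_const 1).const_mul 2).div
          ((hasDerivAt_id y).add_const 1) hy1'
      have h2' : HasDerivAt (fun y : ℝ => 2 * (y - 1) / (y + 1)) (4 / (y + 1) ^ 2) y := by
        convert h2 using 1; simp only [id]; field_simp; ring
      exact h1.sub h2'
    apply monotoneOn_of_deriv_nonneg (convex_Ici 1)
    · apply ContinuousOn.sub
      · exact fun y hy => (Real.continuousAt_log (by intro h; simp [h] at hy; linarith)).continuousWithinAt
      · apply ContinuousOn.div
        · fun_prop
        · fun_prop
        · intro y hy; have : (1:ℝ) ≤ y := hy; intro h; linarith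
    · intro y hy
      exact (hderiv y hy).differentiableAt.differentiableWithinAt
    · intro y hy
      rw [(hderiv y hy).deriv]
      rw [interior_Ici] at hy
      have hy1 : (1:ℝ) < y := hy
      rw [div_sub_div _ _ (by positivity) (by positivity : ((y:ℝ)+1)^2 ≠ 0)]
      apply div_nonneg _ (by positivity)
      nlinarith
  have h1 : f 1 ≤ f x := hmono (by simp) hx hx
  have : f 1 = 0 := by simp [hf]
  rw [this] at h1
  simp only [hf] at h1
  linarith

lemma exp_le_inv_one_sub {x : ℝ} (hx : x < 1) : Real.exp x ≤ (1 - x)⁻¹ := by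
  have h1 : 0 < 1 - x := by linarith
  have h2 : 1 - x ≤ Real.exp (-x) := by
    have := Real.add_one_le_exp (-x); linarith
  rw [Real.exp_neg] at h2
  calc Real.exp x ≤ ((Real.exp x)⁻¹)⁻¹ := by rw [inv_inv]
    _ ≤ (1 - x)⁻¹ := by
        apply inv_anti₀ h1 h2



lemma sqrt_pi_le_stirlingSeq {n : ℕ} (hn : 1 ≤ n) : Real.sqrt π ≤ Stirling.stirlingSeq n := by
  obtain ⟨t, rfl⟩ := Nat.exists_eq_add_of_le hn
  have h := Stirling.stirlingSeq'_antitone.le_of_tendsto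
    (Stirling.tendsto_stirlingSeq_sqrt_pi.comp (tendsto_add_atTop_nat 1)) t
  simpa [Nat.add_comm] using h

lemma factorial_eq {n : ℕ} (hn : 1 ≤ n) :
    (n ! : ℝ) = Stirling.stirlingSeq n * (Real.sqrt (2 * n) * ((n : ℝ) / Real.exp 1) ^ n) := by
  have h0 : (0:ℝ) < n := by exact_mod_cast hn
  have hd : Real.sqrt (2 * n) * ((n : ℝ) / Real.exp 1) ^ n ≠ 0 := by positivity
  rw [Stirling.stirlingSeq, div_mul_cancel₀ _ hd]

lemma factorial_lower {n : ℕ} (hn : 1 ≤ n) :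
    Real.sqrt π * (Real.sqrt (2 * n) * ((n : ℝ) / Real.exp 1) ^ n) ≤ (n ! : ℝ) := by
  have h0 : (0:ℝ) < n := by exact_mod_cast hn
  rw [factorial_eq hn]
  have hd : 0 ≤ Real.sqrt (2 * n) * ((n : ℝ) / Real.exp 1) ^ n := by positivity
  exact mul_le_mul_of_nonneg_right (sqrt_pi_le_stirlingSeq hn) hd

lemma stirlingSeq_two_mul_le {a : ℕ} (ha : 1 ≤ a) :
    Stirling.stirlingSeq (2 * a) ≤ Stirling.stirlingSeq a := by
  obtain ⟨t, rfl⟩ := Nat.exists_eq_add_of_le ha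
  have h := Stirling.stirlingSeq'_antitone (show t ≤ 2 * (1 + t) - 1 by omega)
  have e : (2 * (1 + t) - 1).succ = 2 * (1 + t) := by omega
  simp only [Function.comp_apply, e] at h
  simpa [Nat.add_comm] using h

lemma Gamma_nat_add_half (k : ℕ) :
    Real.Gamma ((k : ℝ) + 1 / 2) = Real.sqrt π * (2 * k)! / (4 ^ k * k !) := by
  induction k with
  | zero =>
    rw [show ((0:ℕ):ℝ) + 1/2 = 1/2 by norm_num, Real.Gamma_one_half_eq]
    simp
  | succ k ih =>
    have h1 : ((k : ℝ) + 1) + 1 / 2 = ((k : ℝ) + 1 / 2) + 1 := by ring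
    have h2 : ((k : ℝ) + 1 / 2) ≠ 0 := by positivity
    have h3 : (2 * (k + 1))! = (2 * k + 2) * ((2 * k + 1) * (2 * k)!) := by
      have : 2 * (k + 1) = (2 * k + 1) + 1 := by omega
      rw [this, Nat.factorial_succ, Nat.factorial_succ]
    rw [show ((k+1:ℕ):ℝ) = (k:ℝ)+1 by push_cast; ring, h1, Real.Gamma_add_one h2, ih, h3]
    push_cast [pow_succ, Nat.factorial_succ]
    have h4 : (4:ℝ) ^ k ≠ 0 := by positivity
    have h5 : (k ! : ℝ) ≠ 0 := by positivity
    field_simp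
    ring



def wSeq (k : ℕ) : ℝ := 4 ^ k * (k ! : ℝ) ^ 2 / ((2 * k)! * Real.sqrt (π * ((k : ℝ) + 1 / 2)))

lemma mul_sqrt_le_mul_sqrt {A B x y : ℝ} (hA : 0 ≤ A) (hB : 0 ≤ B) (_hx : 0 ≤ x) (_hy : 0 ≤ y)
    (h : A ^ 2 * x ≤ B ^ 2 * y) : A * Real.sqrt x ≤ B * Real.sqrt y := by
  calc A * Real.sqrt x = Real.sqrt (A ^ 2 * x) := by
        rw [Real.sqrt_mul (by positivity), Real.sqrt_sq hA]
    _ ≤ Real.sqrt (B ^ 2 * y) := Real.sqrt_le_sqrt h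
    _ = B * Real.sqrt y := by rw [Real.sqrt_mul (by positivity), Real.sqrt_sq hB]

lemma wSeq_monotone : Monotone wSeq := by
  apply monotone_nat_of_le_succ
  intro k
  unfold wSeq
  have h2k : (0:ℝ) < ((2 * k)! : ℕ) := by exact_mod_cast (2 * k).factorial_pos
  have h2k1 : (0:ℝ) < ((2 * (k + 1))! : ℕ) := by exact_mod_cast (2 * (k + 1)).factorial_pos
  rw [div_le_div_iff₀ (by positivity) (by positivity)]
  have hfac : (((2 * (k + 1))! : ℕ) : ℝ) = (2 * (k:ℝ) + 2) * ((2 * (k:ℝ) + 1) * ((2 * k)! : ℕ)) := by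
    have e : 2 * (k + 1) = (2 * k + 1) + 1 := by omega
    rw [e, Nat.factorial_succ, Nat.factorial_succ]; push_cast; ring
  have hfac2 : (((k + 1)! : ℕ) : ℝ) = ((k:ℝ) + 1) * (k ! : ℕ) := by
    rw [Nat.factorial_succ]; push_cast; ring
  have key : (2 * (k:ℝ) + 1) * Real.sqrt (π * ((k:ℝ) + 1 + 1/2))
      ≤ (2 * (k:ℝ) + 2) * Real.sqrt (π * ((k:ℝ) + 1/2)) := by
    apply mul_sqrt_le_mul_sqrt (by positivity) (by positivity) (by positivity) (by positivity)
    nlinarith [Real.pi_pos]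
  have hP : (0:ℝ) ≤ 4 ^ k * ((k ! : ℕ) : ℝ) ^ 2 * ((2 * k)! : ℕ) * (2 * (k:ℝ) + 2) := by
    positivity
  have hmul := mul_le_mul_of_nonneg_left key hP
  push_cast [hfac, hfac2, pow_succ]
  push_cast at hmul
  nlinarith [hmul]



lemma stirlingSeq_pos {n : ℕ} (hn : 1 ≤ n) : 0 < Stirling.stirlingSeq n := by
  have h := Stirling.stirlingSeq'_pos (n - 1)
  have e : n - 1 + 1 = n := by omega
  rwa [e] at h

lemma wSeq_eq {k : ℕ} (hk : 1 ≤ k) :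
    wSeq k = Stirling.stirlingSeq k ^ 2 / Stirling.stirlingSeq (2 * k) *
      ((k : ℝ) / (Real.sqrt k * Real.sqrt (π * ((k : ℝ) + 1 / 2)))) := by
  have hk0 : (0:ℝ) < k := by exact_mod_cast hk
  have hs2k : 0 < Stirling.stirlingSeq (2 * k) := stirlingSeq_pos (by omega)
  have hsk : 0 < Stirling.stirlingSeq k := stirlingSeq_pos hk
  unfold wSeq
  rw [factorial_eq hk, factorial_eq (show 1 ≤ 2 * k by omega)]
  have e1 : ((2 * k : ℕ) : ℝ) = 2 * (k : ℝ) := by push_cast; ring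
  rw [e1]
  have e2 : Real.sqrt (2 * (2 * (k:ℝ))) = 2 * Real.sqrt k := by
    rw [show 2 * (2 * (k:ℝ)) = 4 * k by ring, Real.sqrt_mul (by norm_num),
      show Real.sqrt 4 = 2 by
        rw [show (4:ℝ) = 2 ^ 2 by norm_num, Real.sqrt_sq (by norm_num)]]
  have e3 : (2 * (k:ℝ) / Real.exp 1) ^ (2 * k) = 4 ^ k * (((k:ℝ) / Real.exp 1) ^ k) ^ 2 := by
    rw [show 2 * (k:ℝ) / Real.exp 1 = 2 * ((k:ℝ) / Real.exp 1) by ring, mul_pow,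
      show (2:ℝ) ^ (2 * k) = 4 ^ k by rw [pow_mul]; norm_num,
      show (2 * k) = k * 2 by ring, pow_mul]
  have e4 : Real.sqrt (2 * (k:ℝ)) ^ 2 = 2 * k := Real.sq_sqrt (by positivity)
  rw [e2, e3, mul_pow, mul_pow, e4]
  have hX : ((k:ℝ) / Real.exp 1) ^ k ≠ 0 := by positivity
  have hS : Real.sqrt (π * ((k:ℝ) + 1/2)) ≠ 0 := by positivity
  have hq : Real.sqrt (k:ℝ) ≠ 0 := by positivity
  field_simp

lemma wSeq_tendsto : Tendsto wSeq atTop (𝓝 1) := by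
  have hπ : Real.sqrt π ≠ 0 := by positivity
  have h2 : Tendsto (fun k : ℕ => Stirling.stirlingSeq (2 * k)) atTop (𝓝 (Real.sqrt π)) :=
    Stirling.tendsto_stirlingSeq_sqrt_pi.comp
      (tendsto_atTop_mono (fun n => by simp only [id_eq]; omega) tendsto_id)
  have hA : Tendsto (fun k : ℕ => Stirling.stirlingSeq k ^ 2 / Stirling.stirlingSeq (2 * k))
      atTop (𝓝 (Real.sqrt π)) := by
    have h1 : Tendsto (fun k : ℕ => Stirling.stirlingSeq k ^ 2) atTop (𝓝 (Real.sqrt π ^ 2)) :=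
      Stirling.tendsto_stirlingSeq_sqrt_pi.pow 2
    have := h1.div h2 hπ
    have e : Real.sqrt π ^ 2 / Real.sqrt π = Real.sqrt π := by
      field_simp [pow_two]
    rwa [e] at this
  have hinner : Tendsto (fun k : ℕ => (k:ℝ) / (π * ((k:ℝ) + 1/2))) atTop (𝓝 (1/π)) := by
    have h3 : Tendsto (fun k : ℕ => (k:ℝ) / ((k:ℝ) + 1/2) * (1/π)) atTop (𝓝 (1 * (1/π))) :=
      (tendsto_natCast_div_add_atTop (1/2 : ℝ)).mul_const (1/π)
    rw [one_mul] at h3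
    apply h3.congr
    intro k
    have hk : ((k:ℝ) + 1/2) ≠ 0 := by positivity
    field_simp
  have hB : Tendsto (fun k : ℕ => Real.sqrt ((k:ℝ) / (π * ((k:ℝ) + 1/2)))) atTop
      (𝓝 ((Real.sqrt π)⁻¹)) := by
    have := hinner.sqrt
    rwa [show Real.sqrt (1/π) = (Real.sqrt π)⁻¹ by
      rw [one_div, Real.sqrt_inv]] at this
  have hAB := hA.mul hB
  rw [mul_inv_cancel₀ hπ] at hAB
  apply hAB.congr'
  filter_upwards [eventually_ge_atTop 1] with k hk
  rw [wSeq_eq hk]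
  congr 1
  have hk0 : (0:ℝ) < k := by exact_mod_cast hk
  rw [Real.sqrt_div hk0.le, div_eq_div_iff (by positivity) (by positivity)]
  have hm : Real.sqrt (k:ℝ) * Real.sqrt (k:ℝ) = (k:ℝ) := Real.mul_self_sqrt hk0.le
  linear_combination Real.sqrt (π * ((k:ℝ) + 1/2)) * hm

lemma wSeq_le_one (k : ℕ) : wSeq k ≤ 1 :=
  wSeq_monotone.ge_of_tendsto wSeq_tendsto k

lemma central_bound (k : ℕ) :
    (4:ℝ) ^ k * (k ! : ℝ) ^ 2 ≤ ((2 * k)! : ℝ) * Real.sqrt (π * ((k:ℝ) + 1/2)) := by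
  have h := wSeq_le_one k
  rw [wSeq, div_le_one (by positivity)] at h
  exact h

lemma Gamma_half_lower (k : ℕ) :
    (k ! : ℝ) / Real.sqrt ((k:ℝ) + 1/2) ≤ Real.Gamma ((k:ℝ) + 1/2) := by
  rw [Gamma_nat_add_half, div_le_div_iff₀ (by positivity) (by positivity)]
  have h := central_bound k
  rw [Real.sqrt_mul pi_pos.le] at h
  nlinarith [h]

/-- `(k/e)^k = k^k e^{-k}` -/
lemma div_exp_pow (k : ℕ) : ((k:ℝ) / Real.exp 1) ^ k = (k:ℝ) ^ k * Real.exp (-(k:ℝ)) := by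
  rw [div_pow, Real.exp_one_pow, Real.exp_neg, div_eq_mul_inv]

/-- clean Stirling lower bound -/
lemma factorial_lower' {k : ℕ} (hk : 1 ≤ k) :
    Real.sqrt (2 * π) * (Real.sqrt k * ((k:ℝ) ^ k * Real.exp (-(k:ℝ)))) ≤ (k ! : ℝ) := by
  have h := factorial_lower hk
  rw [Real.sqrt_mul (by norm_num : (0:ℝ) ≤ 2) π] at *
  rw [Real.sqrt_mul (by norm_num : (0:ℝ) ≤ 2) (k:ℝ), div_exp_pow] at h
  calc Real.sqrt 2 * Real.sqrt π * (Real.sqrt k * ((k:ℝ) ^ k * Real.exp (-(k:ℝ))))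
      = Real.sqrt π * (Real.sqrt 2 * Real.sqrt k * ((k:ℝ) ^ k * Real.exp (-(k:ℝ)))) := by ring
    _ ≤ (k ! : ℝ) := h

lemma Gamma_half_upper (a : ℕ) :
    Real.Gamma ((a:ℝ) + 1/2) ≤ Real.sqrt (2 * π) * (a:ℝ) ^ a * Real.exp (-(a:ℝ)) := by
  rcases Nat.eq_zero_or_pos a with rfl | ha
  · simp only [Nat.cast_zero, zero_add, pow_zero, neg_zero, Real.exp_zero, mul_one]
    rw [Real.Gamma_one_half_eq]
    apply Real.sqrt_le_sqrt
    nlinarith [Real.pi_pos]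
  · have ha2 : 1 ≤ 2 * a := by omega
    have ha0 : (0:ℝ) < a := by exact_mod_cast ha
    rw [Gamma_nat_add_half]
    have key : ((2 * a)! : ℝ) ≤ Stirling.stirlingSeq a *
        (Real.sqrt (2 * ((2 * a : ℕ) : ℝ)) * (((2 * a : ℕ) : ℝ) / Real.exp 1) ^ (2 * a)) := by
      rw [factorial_eq ha2]
      exact mul_le_mul_of_nonneg_right (stirlingSeq_two_mul_le ha) (by positivity)
    have e1 : ((2 * a : ℕ) : ℝ) = 2 * (a : ℝ) := by push_cast; ring
    rw [e1] at key
    have e2 : Real.sqrt (2 * (2 * (a:ℝ))) = 2 * Real.sqrt a := by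
      rw [show 2 * (2 * (a:ℝ)) = 4 * a by ring, Real.sqrt_mul (by norm_num),
        show Real.sqrt 4 = 2 by
          rw [show (4:ℝ) = 2 ^ 2 by norm_num, Real.sqrt_sq (by norm_num)]]
    have e3 : (2 * (a:ℝ) / Real.exp 1) ^ (2 * a) = 4 ^ a * (((a:ℝ) / Real.exp 1) ^ a) ^ 2 := by
      rw [show 2 * (a:ℝ) / Real.exp 1 = 2 * ((a:ℝ) / Real.exp 1) by ring, mul_pow,
        show (2:ℝ) ^ (2 * a) = 4 ^ a by rw [pow_mul]; norm_num,
        show (2 * a) = a * 2 by ring, pow_mul]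
    rw [e2, e3] at key
    have hub := mul_le_mul_of_nonneg_right key (by positivity : (0:ℝ) ≤ Real.sqrt π / (4 ^ a * (a ! : ℝ)))
    calc Real.sqrt π * ((2 * a)! : ℝ) / (4 ^ a * (a ! : ℝ))
        = ((2 * a)! : ℝ) * (Real.sqrt π / (4 ^ a * (a ! : ℝ))) := by ring
      _ ≤ Stirling.stirlingSeq a * (2 * Real.sqrt a * (4 ^ a * (((a:ℝ) / Real.exp 1) ^ a) ^ 2)) *
          (Real.sqrt π / (4 ^ a * (a ! : ℝ))) := hub
      _ = Real.sqrt (2 * π) * (a:ℝ) ^ a * Real.exp (-(a:ℝ)) := by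
          rw [factorial_eq ha]
          have hs : Stirling.stirlingSeq a ≠ 0 := ne_of_gt (stirlingSeq_pos ha)
          have h2a : Real.sqrt (2 * (a:ℝ)) = Real.sqrt 2 * Real.sqrt a :=
            Real.sqrt_mul (by norm_num) _
          have h2π : Real.sqrt (2 * π) = Real.sqrt 2 * Real.sqrt π :=
            Real.sqrt_mul (by norm_num) _
          have hX : ((a:ℝ) / Real.exp 1) ^ a ≠ 0 := by positivity
          have hqa : Real.sqrt (a:ℝ) ≠ 0 := by positivity
          have h2 : Real.sqrt 2 * Real.sqrt 2 = 2 := Real.mul_self_sqrt (by norm_num)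
          rw [h2a, h2π, div_exp_pow]
          field_simp
          linear_combination -h2

lemma Gamma_prod {x : ℝ} (hx : 0 < x) (n : ℕ) :
    Real.Gamma (x + n) = Real.Gamma x * ∏ i ∈ Finset.range n, (x + i) := by
  induction n with
  | zero => simp
  | succ n ih =>
    have h1 : x + ((n:ℕ)+1 : ℕ) = (x + n) + 1 := by push_cast; ring
    rw [h1, Real.Gamma_add_one (by positivity), ih, Finset.prod_range_succ]
    ring
lemma log_sub_ge {M k : ℕ} (hM : 1 ≤ M) (hk : M ≤ k) :
    2 * ((k:ℝ) - M) / ((k:ℝ) + M) ≤ Real.log k - Real.log M := by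
  have hM0 : (0:ℝ) < M := by exact_mod_cast hM
  have hk0 : (0:ℝ) < k := by exact_mod_cast (hM.trans hk)
  have hkM : (M:ℝ) ≤ k := by exact_mod_cast hk
  have h1 : (1:ℝ) ≤ (k:ℝ) / M := by rw [le_div_iff₀ hM0]; linarith
  have h := log_ge_two_mul_div h1
  rw [Real.log_div (by positivity) (by positivity)] at h
  have e : 2 * ((k:ℝ)/M - 1) / ((k:ℝ)/M + 1) = 2 * ((k:ℝ) - M) / ((k:ℝ) + M) := by
    rw [div_eq_div_iff (by positivity) (by positivity)]
    field_simp
    try ring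
  rw [e] at h
  exact h

lemma log_linear_form {b x : ℝ} (hb : 0 < b) (hx : 0 < x) (k : ℕ) (c : ℝ) :
    Real.log (b ^ k * Real.sqrt x * Real.exp c) = k * Real.log b + Real.log x / 2 + c := by
  have h1 : b ^ k ≠ 0 := ne_of_gt (pow_pos hb k)
  have h2 : Real.sqrt x ≠ 0 := ne_of_gt (Real.sqrt_pos.mpr hx)
  have h3 : Real.exp c ≠ 0 := (Real.exp_pos _).ne'
  rw [Real.log_mul (mul_ne_zero h1 h2) h3, Real.log_mul h1 h2, Real.log_pow,
    Real.log_sqrt hx.le, Real.log_exp]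

lemma core_even {M k : ℕ} (hM : 1 ≤ M) (hk : M ≤ k) :
    (M:ℝ) ^ k * Real.sqrt M * Real.exp (-(M:ℝ)) ≤ (k:ℝ) ^ k * Real.sqrt k * Real.exp (-(k:ℝ)) := by
  have hM0 : (0:ℝ) < M := by exact_mod_cast hM
  have hk0 : (0:ℝ) < k := by exact_mod_cast (hM.trans hk)
  have hkM : (M:ℝ) ≤ k := by exact_mod_cast hk
  have h1 := log_sub_ge hM hk
  have hpos : (0:ℝ) < (k:ℝ) + M := by positivity
  have h2 : 2 * ((k:ℝ) - M) ≤ (Real.log k - Real.log M) * ((k:ℝ) + M) := by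
    rw [div_le_iff₀ hpos] at h1; linarith
  have ht0 : 0 ≤ Real.log k - Real.log M := by
    have : 0 ≤ 2 * ((k:ℝ) - M) / ((k:ℝ) + M) :=
      div_nonneg (by linarith) hpos.le
    linarith [h1]
  have lpos : (0:ℝ) < (M:ℝ) ^ k * Real.sqrt M * Real.exp (-(M:ℝ)) :=
    mul_pos (mul_pos (pow_pos hM0 k) (Real.sqrt_pos.mpr hM0)) (Real.exp_pos _)
  have rpos : (0:ℝ) < (k:ℝ) ^ k * Real.sqrt k * Real.exp (-(k:ℝ)) :=
    mul_pos (mul_pos (pow_pos hk0 k) (Real.sqrt_pos.mpr hk0)) (Real.exp_pos _)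
  rw [← Real.exp_log lpos, ← Real.exp_log rpos]
  apply Real.exp_le_exp.mpr
  rw [log_linear_form hM0 hM0, log_linear_form hk0 hk0]
  have hint : 0 ≤ (Real.log k - Real.log M) * ((k:ℝ) + 1 - M) := mul_nonneg ht0 (by linarith)
  nlinarith [h2, hint]

lemma core_odd {M k : ℕ} (hM : 1 ≤ M) (hk : M + 1 ≤ k) :
    (M:ℝ) ^ k * Real.sqrt ((k:ℝ) + 1/2) * Real.exp (-(M:ℝ)) ≤
      (k:ℝ) ^ k * Real.sqrt k * Real.exp (-(k:ℝ)) := by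
  have hM0 : (0:ℝ) < M := by exact_mod_cast hM
  have hk1 : 1 ≤ k := by omega
  have hk0 : (0:ℝ) < k := by exact_mod_cast hk1
  have hkM : (M:ℝ) + 1 ≤ k := by exact_mod_cast hk
  have h1 := log_sub_ge hM (by omega : M ≤ k)
  have hpos : (0:ℝ) < (k:ℝ) + M := by positivity
  have h2 : 2 * ((k:ℝ) - M) ≤ (Real.log k - Real.log M) * ((k:ℝ) + M) := by
    rw [div_le_iff₀ hpos] at h1; linarith
  have ht0 : 0 ≤ Real.log k - Real.log M := by
    have : 0 ≤ 2 * ((k:ℝ) - M) / ((k:ℝ) + M) :=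
      div_nonneg (by linarith) hpos.le
    linarith [h1]
  have hq : Real.log ((k:ℝ) + 1/2) - Real.log k ≤ 1 / (2 * k) := by
    have h := Real.log_le_sub_one_of_pos (show (0:ℝ) < ((k:ℝ) + 1/2) / k by positivity)
    rw [Real.log_div (by positivity) (by positivity)] at h
    have e : ((k:ℝ) + 1/2) / k - 1 = 1 / (2 * k) := by field_simp; try ring
    linarith [e.le, e.ge]
  have hkt : ((k:ℝ) - M) + 1 / (4 * k) ≤ (k:ℝ) * (Real.log k - Real.log M) := by
    have hδ : (1:ℝ) ≤ (k:ℝ) - M := by linarith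
    have h1δ : (1:ℝ) ≤ ((k:ℝ) - M) * ((k:ℝ) - M) := by nlinarith [hδ]
    have h14 : (1:ℝ) / (4 * k) ≤ ((k:ℝ) - M) * ((k:ℝ) - M) / ((k:ℝ) + M) := by
      rw [div_le_div_iff₀ (by positivity) hpos]
      nlinarith [h1δ, hk0, hkM]
    have e2 : 2 * ((k:ℝ) - M) * k / ((k:ℝ) + M) - ((k:ℝ) - M) =
        ((k:ℝ) - M) * ((k:ℝ) - M) / ((k:ℝ) + M) := by
      field_simp
      ring
    have t1 : 2 * ((k:ℝ) - M) * k / ((k:ℝ) + M) ≤ (k:ℝ) * (Real.log k - Real.log M) := by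
      rw [div_le_iff₀ hpos]
      nlinarith [mul_le_mul_of_nonneg_left h2 hk0.le]
    linarith
  have e4 : (1:ℝ) / (2 * k) = 2 * (1 / (4 * k)) := by
    field_simp
    ring
  have lpos : (0:ℝ) < (M:ℝ) ^ k * Real.sqrt ((k:ℝ) + 1/2) * Real.exp (-(M:ℝ)) :=
    mul_pos (mul_pos (pow_pos hM0 k) (Real.sqrt_pos.mpr (by positivity))) (Real.exp_pos _)
  have rpos : (0:ℝ) < (k:ℝ) ^ k * Real.sqrt k * Real.exp (-(k:ℝ)) :=
    mul_pos (mul_pos (pow_pos hk0 k) (Real.sqrt_pos.mpr hk0)) (Real.exp_pos _)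
  rw [← Real.exp_log lpos, ← Real.exp_log rpos]
  apply Real.exp_le_exp.mpr
  rw [log_linear_form hM0 (by positivity), log_linear_form hk0 hk0]
  nlinarith [hkt, hq, e4]
lemma gamma_denom_lower {m M : ℕ} (hm : 2 ≤ m) (hM : 1 ≤ M) :
    Real.sqrt (2 * π) * (M:ℝ) ^ M * Real.exp (-(M:ℝ)) * (M:ℝ) ^ (((m:ℝ) - 1) / 2) ≤
      Real.Gamma ((m:ℝ) / 2 + M) := by
  have hM0 : (0:ℝ) < M := by exact_mod_cast hM
  rcases Nat.even_or_odd m with he | ho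
  · -- even case : m = c + c
    obtain ⟨c, hc⟩ := he
    have hc1 : 1 ≤ c := by omega
    set k := M + c - 1 with hkdef
    have hk : k + 1 = M + c := by omega
    have hkM : M ≤ k := by omega
    have hk1 : 1 ≤ k := le_trans hM hkM
    have hk0 : (0:ℝ) < k := by exact_mod_cast hk1
    have hkcast : (k:ℝ) + 1 = (M:ℝ) + c := by exact_mod_cast congrArg (Nat.cast (R := ℝ)) hk
    have hGamma : Real.Gamma ((m:ℝ) / 2 + M) = (k ! : ℝ) := by
      have e : (m:ℝ) / 2 + M = (k:ℝ) + 1 := by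
        have : (m:ℝ) = (c:ℝ) + c := by exact_mod_cast congrArg (Nat.cast (R := ℝ)) hc
        rw [this]; linarith [hkcast]
      rw [e, Real.Gamma_nat_eq_factorial]
    rw [hGamma]
    have hexp : (M:ℝ) ^ (((m:ℝ) - 1) / 2) = (M:ℝ) ^ (c - 1 : ℕ) * Real.sqrt M := by
      have e1 : ((m:ℝ) - 1) / 2 = ((c - 1 : ℕ) : ℝ) + 1/2 := by
        have h1 : (m:ℝ) = (c:ℝ) + c := by exact_mod_cast congrArg (Nat.cast (R := ℝ)) hc
        have h2 : ((c - 1 : ℕ) : ℝ) = (c:ℝ) - 1 := by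
          rw [Nat.cast_sub hc1]; norm_num
        rw [h1, h2]; ring
      rw [e1, Real.rpow_add hM0, Real.rpow_natCast, ← Real.sqrt_eq_rpow]
    rw [hexp]
    have epow : (M:ℝ) ^ M * (M:ℝ) ^ (c - 1 : ℕ) = (M:ℝ) ^ k := by
      rw [← pow_add]; congr 1; omega
    have step1 : Real.sqrt (2 * π) * (M:ℝ) ^ M * Real.exp (-(M:ℝ)) *
        ((M:ℝ) ^ (c - 1 : ℕ) * Real.sqrt M) =
        Real.sqrt (2 * π) * ((M:ℝ) ^ k * Real.sqrt M * Real.exp (-(M:ℝ))) := by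
      rw [← epow]; ring
    rw [step1]
    calc Real.sqrt (2 * π) * ((M:ℝ) ^ k * Real.sqrt M * Real.exp (-(M:ℝ)))
        ≤ Real.sqrt (2 * π) * ((k:ℝ) ^ k * Real.sqrt k * Real.exp (-(k:ℝ))) :=
          mul_le_mul_of_nonneg_left (core_even hM hkM) (Real.sqrt_nonneg _)
      _ = Real.sqrt (2 * π) * (Real.sqrt k * ((k:ℝ) ^ k * Real.exp (-(k:ℝ)))) := by ring
      _ ≤ (k ! : ℝ) := factorial_lower' hk1
  · -- odd case : m = 2 * c + 1
    obtain ⟨c, hc⟩ := ho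
    have hc1 : 1 ≤ c := by omega
    set k := M + c with hkdef
    have hk1 : 1 ≤ k := by omega
    have hk0 : (0:ℝ) < k := by exact_mod_cast hk1
    have hkM : M + 1 ≤ k := by omega
    have hkcast : (k:ℝ) = (M:ℝ) + c := by exact_mod_cast congrArg (Nat.cast (R := ℝ)) hkdef
    have hmcast : (m:ℝ) = 2 * c + 1 := by exact_mod_cast congrArg (Nat.cast (R := ℝ)) hc
    have e : (m:ℝ) / 2 + M = (k:ℝ) + 1/2 := by rw [hmcast, hkcast]; ring
    rw [e]
    have hexp : (M:ℝ) ^ (((m:ℝ) - 1) / 2) = (M:ℝ) ^ (c : ℕ) := by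
      have e1 : ((m:ℝ) - 1) / 2 = ((c : ℕ) : ℝ) := by rw [hmcast]; ring
      rw [e1, Real.rpow_natCast]
    rw [hexp]
    have epow : (M:ℝ) ^ M * (M:ℝ) ^ (c : ℕ) = (M:ℝ) ^ k := by
      rw [← pow_add]
    have hsq : (0:ℝ) < Real.sqrt ((k:ℝ) + 1/2) := Real.sqrt_pos.mpr (by positivity)
    have step : Real.sqrt (2 * π) * (M:ℝ) ^ M * Real.exp (-(M:ℝ)) * (M:ℝ) ^ (c : ℕ) ≤
        (k ! : ℝ) / Real.sqrt ((k:ℝ) + 1/2) := by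
      rw [le_div_iff₀ hsq]
      calc Real.sqrt (2 * π) * (M:ℝ) ^ M * Real.exp (-(M:ℝ)) * (M:ℝ) ^ (c : ℕ) *
            Real.sqrt ((k:ℝ) + 1/2)
          = Real.sqrt (2 * π) * ((M:ℝ) ^ k * Real.sqrt ((k:ℝ) + 1/2) * Real.exp (-(M:ℝ))) := by
            rw [← epow]; ring
        _ ≤ Real.sqrt (2 * π) * ((k:ℝ) ^ k * Real.sqrt k * Real.exp (-(k:ℝ))) :=
            mul_le_mul_of_nonneg_left (core_odd hM hkM) (Real.sqrt_nonneg _)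
        _ = Real.sqrt (2 * π) * (Real.sqrt k * ((k:ℝ) ^ k * Real.exp (-(k:ℝ)))) := by ring
        _ ≤ (k ! : ℝ) := factorial_lower' hk1
    exact le_trans step (Gamma_half_lower k)

lemma sqrt_pow_eq_rpow {x : ℝ} (hx : 0 ≤ x) (n : ℕ) :
    Real.sqrt x ^ n = x ^ ((n:ℝ)/2) := by
  rw [Real.sqrt_eq_rpow, ← Real.rpow_natCast (x ^ ((1:ℝ)/2)) n, ← Real.rpow_mul hx]
  congr 1
  ring

end KTaux

open KTaux

/-- upper bound on the log of the KT estimated probability: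
`log P_e(a) ≤ ∑_j a(j) log(a(j)/M) − ((m−1)/2) log(M/(2π)) − log(π^{m/2}/Γ(m/2))`. -/
theorem ktProb_log_upper_bound (m : ℕ) (hm : 2 ≤ m) (a : Fin m → ℕ)
    (hM : 1 ≤ ∑ j, a j) :
    Real.log (ktProb m a) ≤
      (∑ j, (a j : ℝ) * Real.log ((a j : ℝ) / (∑ j, a j : ℕ))) -
        ((m : ℝ) - 1) / 2 * Real.log ((∑ j, a j : ℕ) / (2 * π)) -
        Real.log (π ^ ((m : ℝ) / 2) / Real.Gamma ((m : ℝ) / 2)) := by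
  set M := ∑ j, a j with hMdef
  have hM0 : (0:ℝ) < M := by exact_mod_cast hM
  have hm0 : (0:ℝ) < (m:ℝ) / 2 := by
    have : (0:ℝ) < m := by exact_mod_cast (by omega : 0 < m)
    linarith
  have hΓm : 0 < Real.Gamma ((m:ℝ) / 2) := Real.Gamma_pos_of_pos hm0
  have hGpos : 0 < Real.Gamma ((m:ℝ) / 2 + M) := Real.Gamma_pos_of_pos (by linarith)
  have hsπ : (0:ℝ) < Real.sqrt π := Real.sqrt_pos.mpr pi_pos
  have hs2π : (0:ℝ) < Real.sqrt (2 * π) := Real.sqrt_pos.mpr (by positivity)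
  -- closed form for the two products
  have hnum : ∀ n : ℕ, ∏ i ∈ Finset.range n, ((i:ℝ) + 1/2) =
      Real.Gamma ((n:ℝ) + 1/2) / Real.sqrt π := by
    intro n
    have h := Gamma_prod (show (0:ℝ) < 1/2 by norm_num) n
    rw [Real.Gamma_one_half_eq] at h
    have e : (1:ℝ)/2 + n = (n:ℝ) + 1/2 := by ring
    rw [e] at h
    rw [h, mul_div_cancel_left₀ _ hsπ.ne']
    exact Finset.prod_congr rfl (fun i _ => by ring)
  have hden : ∏ i ∈ Finset.range M, ((m:ℝ)/2 + i) =
      Real.Gamma ((m:ℝ)/2 + M) / Real.Gamma ((m:ℝ)/2) := by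
    rw [Gamma_prod hm0 M, mul_div_cancel_left₀ _ hΓm.ne']
  have hkt : ktProb m a = (∏ j, Real.Gamma ((a j : ℝ) + 1/2)) * Real.Gamma ((m:ℝ)/2) /
      ((Real.sqrt π) ^ m * Real.Gamma ((m:ℝ)/2 + M)) := by
    rw [ktProb, Finset.prod_congr rfl (fun j _ => hnum (a j)), ← hMdef, hden,
      Finset.prod_div_distrib, Finset.prod_const, Finset.card_univ, Fintype.card_fin]
    rw [div_div_div_comm]
    field_simp [hΓm.ne', hGpos.ne']
    ring
  have hktpos : 0 < ktProb m a := by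
    rw [hkt]
    exact div_pos
      (mul_pos (Finset.prod_pos fun j _ => Real.Gamma_pos_of_pos (by positivity)) hΓm)
      (mul_pos (pow_pos hsπ m) hGpos)
  -- numerator upper bound
  have hnum_bound : (∏ j, Real.Gamma ((a j : ℝ) + 1/2)) ≤
      Real.sqrt (2*π) ^ m * (∏ j, (a j : ℝ) ^ (a j)) * Real.exp (-(M:ℝ)) := by
    calc ∏ j, Real.Gamma ((a j : ℝ) + 1/2)
        ≤ ∏ j, (Real.sqrt (2*π) * (a j : ℝ) ^ (a j) * Real.exp (-(a j : ℝ))) :=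
          Finset.prod_le_prod
            (fun j _ => (Real.Gamma_pos_of_pos (by positivity)).le)
            (fun j _ => Gamma_half_upper (a j))
      _ = Real.sqrt (2*π) ^ m * (∏ j, (a j : ℝ) ^ (a j)) * Real.exp (-(M:ℝ)) := by
          rw [Finset.prod_mul_distrib, Finset.prod_mul_distrib, Finset.prod_const,
            Finset.card_univ, Fintype.card_fin, ← Real.exp_sum]
          congr 2
          rw [Finset.sum_neg_distrib, hMdef]
          push_cast
          rfl
  have hdenom_bound := gamma_denom_lower hm hM
  set P := ∏ j, (a j : ℝ) ^ (a j) with hP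
  have hPpos : 0 < P := Finset.prod_pos (fun j _ => by
    rcases Nat.eq_zero_or_pos (a j) with h | h
    · simp [h]
    · exact pow_pos (by exact_mod_cast h) _)
  set B' := Real.sqrt (2*π) * (M:ℝ)^M * Real.exp (-(M:ℝ)) * (M:ℝ) ^ (((m:ℝ)-1)/2) with hB'
  have hB'pos : 0 < B' :=
    mul_pos (mul_pos (mul_pos hs2π (pow_pos hM0 M)) (Real.exp_pos _))
      (Real.rpow_pos_of_pos hM0 _)
  have hmain : ktProb m a ≤
      Real.sqrt (2*π) ^ m * P * Real.exp (-(M:ℝ)) * Real.Gamma ((m:ℝ)/2) /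
        ((Real.sqrt π) ^ m * B') := by
    rw [hkt]
    apply div_le_div₀
    · exact mul_nonneg
        (mul_nonneg (mul_nonneg (pow_nonneg hs2π.le m) hPpos.le) (Real.exp_pos _).le) hΓm.le
    · exact mul_le_mul_of_nonneg_right hnum_bound hΓm.le
    · exact mul_pos (pow_pos hsπ m) hB'pos
    · exact mul_le_mul_of_nonneg_left hdenom_bound (pow_nonneg hsπ.le m)
  -- identify the middle quantity with the product form of the RHS
  have E1 : ∏ j, ((a j : ℝ) / M) ^ (a j) = P / (M:ℝ) ^ M := by
    rw [hP, Finset.prod_congr rfl (fun j _ => div_pow (a j : ℝ) (M:ℝ) (a j)),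
      Finset.prod_div_distrib, Finset.prod_pow_eq_pow_sum]
  have E3 : (Real.sqrt π) ^ m = π ^ ((m:ℝ)/2) := sqrt_pow_eq_rpow pi_pos.le m
  have E4 : Real.sqrt (2*π) ^ m = (2*π) ^ (((m:ℝ)-1)/2) * Real.sqrt (2*π) := by
    rw [sqrt_pow_eq_rpow (by positivity) m,
      show (m:ℝ)/2 = ((m:ℝ)-1)/2 + 1/2 by ring,
      Real.rpow_add (by positivity), ← Real.sqrt_eq_rpow]
  have hRHS : Real.sqrt (2*π) ^ m * P * Real.exp (-(M:ℝ)) * Real.Gamma ((m:ℝ)/2) /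
        ((Real.sqrt π) ^ m * B') =
      (∏ j, ((a j : ℝ)/M) ^ (a j)) * (2*π/(M:ℝ)) ^ (((m:ℝ)-1)/2) *
        (Real.Gamma ((m:ℝ)/2) / π ^ ((m:ℝ)/2)) := by
    rw [E1, Real.div_rpow (by positivity) hM0.le, E3, E4, hB']
    have h1 : ((2*π:ℝ)) ^ (((m:ℝ)-1)/2) ≠ 0 := (Real.rpow_pos_of_pos (by positivity) _).ne'
    have h2 : (M:ℝ) ^ (((m:ℝ)-1)/2) ≠ 0 := (Real.rpow_pos_of_pos hM0 _).ne'
    have h3 : π ^ ((m:ℝ)/2) ≠ 0 := (Real.rpow_pos_of_pos pi_pos _).ne'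
    have h4 : ((M:ℝ)) ^ (M:ℕ) ≠ 0 := (pow_pos hM0 M).ne'
    have h5 : Real.exp (-(M:ℝ)) ≠ 0 := (Real.exp_pos _).ne'
    field_simp
  -- take logarithms
  have hfactor_pos : ∀ j : Fin m, 0 < ((a j : ℝ)/M) ^ (a j) := fun j => by
    rcases Nat.eq_zero_or_pos (a j) with h | h
    · simp [h]
    · exact pow_pos (div_pos (by exact_mod_cast h) hM0) _
  have hprod_pos : 0 < ∏ j, ((a j:ℝ)/M) ^ (a j) := Finset.prod_pos fun j _ => hfactor_pos j
  have hrp : 0 < (2*π/(M:ℝ)) ^ (((m:ℝ)-1)/2) := Real.rpow_pos_of_pos (by positivity) _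
  have hfrac : 0 < Real.Gamma ((m:ℝ)/2) / π ^ ((m:ℝ)/2) :=
    div_pos hΓm (Real.rpow_pos_of_pos pi_pos _)
  have hloglog : Real.log (ktProb m a) ≤
      Real.log ((∏ j, ((a j : ℝ)/M) ^ (a j)) * (2*π/(M:ℝ)) ^ (((m:ℝ)-1)/2) *
        (Real.Gamma ((m:ℝ)/2) / π ^ ((m:ℝ)/2))) :=
    Real.log_le_log hktpos (le_of_le_of_eq hmain hRHS)
  rw [Real.log_mul (mul_pos hprod_pos hrp).ne' hfrac.ne',
    Real.log_mul hprod_pos.ne' hrp.ne',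
    Real.log_prod (fun j _ => (hfactor_pos j).ne'),
    Real.log_rpow (by positivity : (0:ℝ) < 2*π/(M:ℝ))] at hloglog
  have elog1 : Real.log (2*π/(M:ℝ)) = - Real.log ((M:ℝ)/(2*π)) := by
    rw [← Real.log_inv, inv_div]
  have elog2 : Real.log (Real.Gamma ((m:ℝ)/2) / π ^ ((m:ℝ)/2)) =
      - Real.log (π ^ ((m:ℝ)/2) / Real.Gamma ((m:ℝ)/2)) := by
    rw [← Real.log_inv, inv_div]
  rw [elog1, elog2] at hloglog
  have esum : ∀ j : Fin m, Real.log (((a j : ℝ)/M) ^ (a j)) =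
      (a j : ℝ) * Real.log ((a j : ℝ)/M) := fun j => by
    rw [Real.log_pow]
  rw [Finset.sum_congr rfl (fun j _ => esum j)] at hloglog
  linarith [hloglog]

end
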